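/- The group homomorphism from the free product of four copies of the cyclic group of order 2 into GL(4,ℝ), sending the generator of the i-th free factor to the matrix S_i, is injective. Equivalently, the Apollonian group A = ⟨S_1,S_2,S_3,S_4⟩ has the presentation with the relations S_i² = I only: every product S_{i_1}·S_{i_2}·⋯·S_{i_n} with n ≥ 1 and i_j ≠ i_{j+1} for all j is different from the identity, and distinct such reduced words give distinct group elements. -/

import Mathlib

open Matrix
open Pointwise

/-- The Apollonian generators `S₁, S₂, S₃, S₄`. -/
noncomputable def S : Fin 4 → Matrix (Fin 4) (Fin 4) ℝ := fun i =>
  Matrix.of fun j k =>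
    if j = i then (if k = i then -1 else 2) else (if j = k then 1 else 0)

lemma S_sq (i : Fin 4) : S i * S i = 1 := by
  ext j k
  fin_cases i <;> fin_cases j <;> fin_cases k <;>
    simp [S, Matrix.mul_apply, Fin.sum_univ_four, Matrix.one_apply]

/-- The Apollonian generators as units of the matrix ring. -/
noncomputable def Sunit (i : Fin 4) : GL (Fin 4) ℝ := ⟨S i, S i, S_sq i, S_sq i⟩

lemma S_mulVec (i : Fin 4) (v : Fin 4 → ℝ) (j : Fin 4) :
    (S i).mulVec v j = if j = i then 2 * (∑ k, v k) - 3 * v i else v j := by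
  simp only [Matrix.mulVec, dotProduct, S, Matrix.of_apply]
  split
  · have h : ∀ k : Fin 4, (if k = i then (-1:ℝ) else 2) * v k
        = 2 * v k + (if k = i then (-3) * v k else 0) := by
      intro k; split <;> ring
    rw [Finset.sum_congr rfl fun k _ => h k, Finset.sum_add_distrib,
      Finset.sum_ite_eq' Finset.univ i fun k => (-3) * v k]
    simp [Finset.mul_sum]
    ring
  · simp [Finset.sum_ite_eq Finset.univ j v]

/-- `GL (Fin 4) ℝ` acts on column vectors. -/
noncomputable instance : MulAction (GL (Fin 4) ℝ) (Fin 4 → ℝ) where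
  smul g v := (g : Matrix (Fin 4) (Fin 4) ℝ).mulVec v
  one_smul v := by
    show ((1 : GL (Fin 4) ℝ) : Matrix (Fin 4) (Fin 4) ℝ).mulVec v = v
    simp
  mul_smul g h v := by
    show ((g * h : GL (Fin 4) ℝ) : Matrix (Fin 4) (Fin 4) ℝ).mulVec v
      = (g : Matrix (Fin 4) (Fin 4) ℝ).mulVec ((h : Matrix (Fin 4) (Fin 4) ℝ).mulVec v)
    simp [Matrix.mulVec_mulVec, Units.val_mul]

lemma two_cases (x : Multiplicative (ZMod 2)) :
    x = 1 ∨ x = Multiplicative.ofAdd 1 := by revert x; decide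

lemma Sunit_sq (i : Fin 4) : Sunit i * Sunit i = 1 := Units.ext (S_sq i)

/-- The homomorphism `ZMod 2 →* GL` sending the generator to `Sunit i`. -/
noncomputable def f (i : Fin 4) : Multiplicative (ZMod 2) →* GL (Fin 4) ℝ where
  toFun x := if x = 1 then 1 else Sunit i
  map_one' := if_pos rfl
  map_mul' x y := by
    rcases two_cases x with rfl | rfl <;> rcases two_cases y with rfl | rfl <;>
      simp [show (Multiplicative.ofAdd (1 : ZMod 2)) * Multiplicative.ofAdd 1 = 1 from by decide,
        show (Multiplicative.ofAdd (1 : ZMod 2)) ≠ 1 from by decide, Sunit_sq]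

/-- The ping-pong sets. -/
def X (i : Fin 4) : Set (Fin 4 → ℝ) :=
  {v | (∀ k, 0 < v k) ∧ ∑ k, v k < 2 * v i}

lemma X_nonempty (i : Fin 4) : (X i).Nonempty := by
  refine ⟨fun k => if k = i then 4 else 1, ?_, ?_⟩
  · intro k; dsimp only; split <;> norm_num
  · show (∑ k, if k = i then (4:ℝ) else 1) < 2 * (if i = i then (4:ℝ) else 1)
    have h : ∀ k ∈ Finset.univ, (if k = i then (4:ℝ) else 1)
        = 1 + (if k = i then 3 else 0) := by
      intro k _; split <;> norm_num
    rw [if_pos rfl, Finset.sum_congr rfl h, Finset.sum_add_distrib,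
      Finset.sum_ite_eq' Finset.univ i fun _ => (3:ℝ)]
    norm_num [Finset.sum_const, Finset.card_univ]

lemma pair_le {i j : Fin 4} (hij : i ≠ j) {v : Fin 4 → ℝ} (hpos : ∀ k, 0 < v k) :
    v i + v j ≤ ∑ k, v k := by
  have h := Finset.sum_le_sum_of_subset_of_nonneg (Finset.subset_univ ({i, j} : Finset (Fin 4)))
    (fun k _ _ => (hpos k).le)
  rwa [Finset.sum_pair hij] at h

lemma X_disj : Pairwise (Function.onFun Disjoint X) := by
  intro i j hij
  rw [Function.onFun, Set.disjoint_left]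
  rintro v ⟨hpos, hi⟩ ⟨_, hj⟩
  have := pair_le hij hpos
  linarith

set_option synthInstance.maxHeartbeats 1000000 in
lemma X_pp : Pairwise fun i j => ∀ h : Multiplicative (ZMod 2), h ≠ 1 → f i h • X j ⊆ X i := by
  intro i j hij h hne
  rcases two_cases h with rfl | rfl
  · exact absurd rfl hne
  have hf : f i (Multiplicative.ofAdd 1) = Sunit i := by
    simp [f, show (Multiplicative.ofAdd (1 : ZMod 2)) ≠ 1 from by decide]
  rw [hf]
  rintro w hw
  rw [Set.mem_smul_set] at hw
  obtain ⟨v, ⟨hpos, hsum⟩, rfl⟩ := hw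
  have hsmul : (Sunit i) • v = (S i).mulVec v := rfl
  rw [hsmul]
  have hT : v i + v j ≤ ∑ k, v k := pair_le hij hpos
  have h2i : 2 * v i < ∑ k, v k := by
    have hvj : v i < v j := by linarith
    linarith
  constructor
  · intro k
    rw [S_mulVec]
    split
    · linarith [hpos i]
    · exact hpos k
  · have hsum' : ∑ k, (S i).mulVec v k = 3 * (∑ k, v k) - 4 * v i := by
      have h1 : ∀ k ∈ Finset.univ, (S i).mulVec v k
          = v k + (if k = i then 2 * (∑ l, v l) - 4 * v i else 0) := by
        intro k _
        rw [S_mulVec]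
        by_cases hk : k = i
        · subst hk; rw [if_pos rfl, if_pos rfl]; ring
        · rw [if_neg hk, if_neg hk]; ring
      rw [Finset.sum_congr rfl h1, Finset.sum_add_distrib,
        Finset.sum_ite_eq' Finset.univ i]
      simp
      ring
    rw [hsum', S_mulVec, if_pos rfl]
    linarith

set_option synthInstance.maxHeartbeats 1000000 in
set_option maxHeartbeats 1000000 in
/-- The Apollonian group has the presentation `⟨S₁,S₂,S₃,S₄ | S i² = I⟩`: any
group homomorphism from the free product of four copies of the cyclic group of
order two into `GL(4, ℝ)` sending the generator of the `i`-th free factor to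
`S i` is injective. Equivalently, every reduced word
`S i₁ · S i₂ ⋯ S iₙ` (with `n ≥ 1` and adjacent indices distinct) is not the
identity, and distinct reduced words give distinct group elements. -/
theorem apollonian_group_free_product
    (φ : (Monoid.CoprodI fun _ : Fin 4 => Multiplicative (ZMod 2)) →* GL (Fin 4) ℝ)
    (hφ : ∀ i : Fin 4,
      (φ (Monoid.CoprodI.of (i := i) (Multiplicative.ofAdd (1 : ZMod 2))) :
        Matrix (Fin 4) (Fin 4) ℝ) = S i) :
    Function.Injective φ := by
  have hφ' : φ = Monoid.CoprodI.lift f := by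
    apply Monoid.CoprodI.ext_hom
    intro i
    refine MonoidHom.ext fun x => ?_
    rcases two_cases x with rfl | rfl
    · simp
    · simp only [MonoidHom.comp_apply, Monoid.CoprodI.lift_of]
      have hf : f i (Multiplicative.ofAdd 1) = Sunit i := by
        simp [f, show (Multiplicative.ofAdd (1 : ZMod 2)) ≠ 1 from by decide]
      rw [hf]
      exact Units.ext (by rw [hφ i]; rfl)
  rw [hφ']
  apply Monoid.CoprodI.lift_injective_of_ping_pong f ?_ X X_nonempty X_disj X_pp
  left
  rw [Cardinal.mk_fintype]
  norm_num
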